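/- Let $\{w(Y_k^i)\}$ be nonnegative random weights indexed by $\mathcal{I} = \{(i,k) : i \in [n], k \in [N^i]\} \cup \{(\star, N^\star+1)\}$, where the labels $Y_k^i$ for $k \le N^i$ are independent with $Y_k^i \sim P_Y^i$, $Y_{N^\star+1}^\star \sim P_Y^\star$, and $P_Y^{cal} = \sum_{i=1}^n (N^i/N) P_Y^i$ with $N = \sum_i N^i$. Write $\mathbb{E} w(Y^{cal}) = \sum_y P_Y^{cal}(y) w(y)$ and assume $\min_y w(y) > 0$. Then $\mathbb{P}\Big( \min_{(i,k)\in\mathcal{I}} \frac{w(Y_k^i)}{\sum_{(j,l)\in\mathcal{I}} w(Y_l^j)} < \frac{\min_y w(y)}{2N\, \mathbb{E} w(Y^{cal})} \Big) \le \frac{4\,\mathrm{Var}(w(Y^{cal}))}{N\,(\mathbb{E} w(Y^{cal}))^2} + \frac{2\, \mathbb{E} w(Y_{N^\star+1}^\star)}{N\, \mathbb{E} w(Y^{cal})}$. -/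

import Mathlib

open MeasureTheory ProbabilityTheory

/-- With high probability, the smallest normalized importance weight among all
calibration points and the test point is not too small. -/
theorem stmt_11 (Ω : Type*) [MeasurableSpace Ω] (μ : Measure Ω) [IsProbabilityMeasure μ]
    (𝒴 : Type*) [Fintype 𝒴] [Nonempty 𝒴] [MeasurableSpace 𝒴] [MeasurableSingletonClass 𝒴]
    (n : ℕ) (hn : 0 < n) (Nc : Fin n → ℕ) (Nt : ℕ) (hNt : Nt = ∑ i, Nc i) (hNtpos : 0 < Nt)
    (Y : ((Σ i : Fin n, Fin (Nc i)) ⊕ Unit) → Ω → 𝒴)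
    (hmeas : ∀ j, Measurable (Y j))
    (hind : iIndepFun Y μ)
    (PY : Fin n → 𝒴 → ℝ) (Pstar : 𝒴 → ℝ)
    (hlaw : ∀ (i : Fin n) (k : Fin (Nc i)) (y : 𝒴),
      (μ {ω | Y (Sum.inl ⟨i, k⟩) ω = y}).toReal = PY i y)
    (hlawstar : ∀ y : 𝒴, (μ {ω | Y (Sum.inr ()) ω = y}).toReal = Pstar y)
    (w : 𝒴 → ℝ) (hw : ∀ y, 0 < w y)
    (Pcal : 𝒴 → ℝ) (hPcal : ∀ y, Pcal y = ∑ i, ((Nc i : ℝ) / Nt) * PY i y)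
    (Ew Vw wmin : ℝ)
    (hEw : Ew = ∑ y, Pcal y * w y) (hEwpos : 0 < Ew)
    (hVw : Vw = ∑ y, Pcal y * (w y - Ew) ^ 2)
    (hwmin : wmin = Finset.univ.inf' Finset.univ_nonempty w) :
    (μ {ω | Finset.univ.inf' Finset.univ_nonempty
        (fun j => w (Y j ω) / ∑ l, w (Y l ω)) < wmin / (2 * Nt * Ew)}).toReal
      ≤ 4 * Vw / (Nt * Ew ^ 2) + 2 * (∑ y, Pstar y * w y) / (Nt * Ew) := by
  classical
  have hNtR : (0:ℝ) < Nt := by exact_mod_cast hNtpos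
  have hNt0 : (Nt:ℝ) ≠ 0 := ne_of_gt hNtR
  have hwmeas : ∀ f : 𝒴 → ℝ, Measurable f := fun f => measurable_of_countable f
  -- the law of each Y j
  set q : ((Σ i : Fin n, Fin (Nc i)) ⊕ Unit) → 𝒴 → ℝ :=
    Sum.elim (fun p => PY p.1) (fun _ => Pstar) with hq_def
  have hq : ∀ j y, (μ {ω | Y j ω = y}).toReal = q j y := by
    rintro (⟨i, k⟩ | ⟨⟩) y
    · exact hlaw i k y
    · exact hlawstar y
  -- expectations of functions of Y j
  have hExp : ∀ j (f : 𝒴 → ℝ), ∫ ω, f (Y j ω) ∂μ = ∑ y, q j y * f y := by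
    intro j f
    have hYm := hmeas j
    have : IsProbabilityMeasure (μ.map (Y j)) := Measure.isProbabilityMeasure_map hYm.aemeasurable
    rw [← integral_map hYm.aemeasurable (hwmeas f).aestronglyMeasurable,
      integral_fintype Integrable.of_finite]
    refine Finset.sum_congr rfl fun y _ => ?_
    rw [measureReal_def, Measure.map_apply hYm (measurableSet_singleton y), smul_eq_mul, ← hq j y]
    have hpre : Y j ⁻¹' {y} = {ω | Y j ω = y} := by ext ω; simp
    rw [hpre]
  have hq_sum : ∀ j, ∑ y, q j y = 1 := by
    intro j
    have h := hExp j (fun _ => 1)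
    simpa using h.symm
  -- the random weights
  set X : ((Σ i : Fin n, Fin (Nc i)) ⊕ Unit) → Ω → ℝ := fun j ω => w (Y j ω) with hX_def
  have hXmeas : ∀ j, Measurable (X j) := fun j => (hwmeas w).comp (hmeas j)
  have hL2 : ∀ j, MemLp (X j) 2 μ := by
    intro j
    refine MemLp.of_bound (hXmeas j).aestronglyMeasurable
      (Finset.univ.sup' Finset.univ_nonempty fun y => |w y|) ?_
    filter_upwards with ω
    rw [Real.norm_eq_abs]
    exact Finset.le_sup' (fun y => |w y|) (Finset.mem_univ (Y j ω))
  have hInt : ∀ j, Integrable (X j) μ := fun j => (hL2 j).integrable one_le_two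
  have hmean : ∀ j, μ[X j] = ∑ y, q j y * w y := fun j => hExp j w
  -- variance bound for each weight
  have hvar : ∀ j, variance (X j) μ ≤ ∑ y, q j y * (w y - Ew) ^ 2 := by
    intro j
    have h1 : μ[(X j) ^ 2] = ∑ y, q j y * (w y) ^ 2 := hExp j (fun y => (w y) ^ 2)
    have h2 := variance_eq_sub (hL2 j)
    have h3 : ∑ y, q j y * (w y - Ew) ^ 2
        = (∑ y, q j y * (w y) ^ 2) - 2 * Ew * (∑ y, q j y * w y) + Ew ^ 2 * ∑ y, q j y := by
      rw [Finset.mul_sum, Finset.mul_sum, ← Finset.sum_sub_distrib, ← Finset.sum_add_distrib]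
      exact Finset.sum_congr rfl fun y _ => by ring
    rw [h2, h1, hmean j, h3, hq_sum j]
    nlinarith [sq_nonneg ((∑ y, q j y * w y) - Ew)]
  -- sigma sums
  have hsig : ∀ f : 𝒴 → ℝ,
      (∑ p : Σ i : Fin n, Fin (Nc i), ∑ y, PY p.1 y * f y) = Nt * ∑ y, Pcal y * f y := by
    intro f
    calc (∑ p : Σ i : Fin n, Fin (Nc i), ∑ y, PY p.1 y * f y)
        = ∑ i, ∑ _k : Fin (Nc i), ∑ y, PY i y * f y := by
          rw [← Finset.univ_sigma_univ, Finset.sum_sigma]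
      _ = ∑ i, (Nc i : ℝ) * ∑ y, PY i y * f y := by
          simp [Finset.sum_const, nsmul_eq_mul]
      _ = ∑ i, ∑ y, (Nc i : ℝ) * (PY i y * f y) := by
          exact Finset.sum_congr rfl fun i _ => Finset.mul_sum _ _ _
      _ = ∑ y, ∑ i, (Nc i : ℝ) * (PY i y * f y) := Finset.sum_comm
      _ = Nt * ∑ y, Pcal y * f y := by
          rw [Finset.mul_sum]
          refine Finset.sum_congr rfl fun y _ => ?_
          rw [hPcal, Finset.sum_mul, Finset.mul_sum]
          refine Finset.sum_congr rfl fun i _ => ?_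
          field_simp
  -- calibration index set
  set s : Finset ((Σ i : Fin n, Fin (Nc i)) ⊕ Unit) := Finset.univ.image Sum.inl with hs_def
  have hsum_s : ∀ g : ((Σ i : Fin n, Fin (Nc i)) ⊕ Unit) → ℝ,
      ∑ j ∈ s, g j = ∑ p : Σ i : Fin n, Fin (Nc i), g (Sum.inl p) := by
    intro g
    rw [hs_def, Finset.sum_image (fun a _ b _ h => Sum.inl_injective h)]
  -- mean of the calibration sum
  have hScMean : μ[∑ j ∈ s, X j] = Nt * Ew := by
    have : μ[∑ j ∈ s, X j] = ∑ j ∈ s, μ[X j] := by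
      simp only [Finset.sum_apply]
      exact integral_finset_sum s fun j _ => hInt j
    rw [this, hsum_s (fun j => μ[X j])]
    have : ∀ p : Σ i : Fin n, Fin (Nc i), μ[X (Sum.inl p)] = ∑ y, PY p.1 y * w y :=
      fun p => hmean (Sum.inl p)
    rw [Finset.sum_congr rfl fun p _ => this p, hsig w, hEw]
  -- variance of the calibration sum
  have hindX : iIndepFun X μ :=
    hind.comp (fun _ => w) (fun _ => hwmeas w)
  have hpair : Set.Pairwise ↑s fun i j => IndepFun (X i) (X j) μ :=
    fun a _ b _ hab => hindX.indepFun hab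
  have hVarLe : variance (∑ j ∈ s, X j) μ ≤ Nt * Vw := by
    rw [IndepFun.variance_sum (fun j _ => hL2 j) hpair]
    calc ∑ j ∈ s, variance (X j) μ
        ≤ ∑ j ∈ s, ∑ y, q j y * (w y - Ew) ^ 2 := Finset.sum_le_sum fun j _ => hvar j
      _ = ∑ p : Σ i : Fin n, Fin (Nc i), ∑ y, PY p.1 y * (w y - Ew) ^ 2 :=
          hsum_s (fun j => ∑ y, q j y * (w y - Ew) ^ 2)
      _ = Nt * Vw := by rw [hsig (fun y => (w y - Ew) ^ 2), hVw]
  -- the two bad events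
  set c : ℝ := Nt * Ew / 2 with hc_def
  have hc : 0 < c := by positivity
  set A : Set Ω := {ω | c ≤ |(∑ j ∈ s, X j) ω - μ[∑ j ∈ s, X j]|} with hA_def
  set B : Set Ω := {ω | c ≤ X (Sum.inr ()) ω} with hB_def
  -- event inclusion
  have hsub : {ω | Finset.univ.inf' Finset.univ_nonempty
      (fun j => w (Y j ω) / ∑ l, w (Y l ω)) < wmin / (2 * Nt * Ew)} ⊆ A ∪ B := by
    intro ω hω
    simp only [Set.mem_setOf_eq] at hω
    have hSpos : 0 < ∑ l, w (Y l ω) := Finset.sum_pos (fun l _ => hw _) Finset.univ_nonempty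
    obtain ⟨j0, -, hj0⟩ := Finset.exists_mem_eq_inf' Finset.univ_nonempty
      (fun j => w (Y j ω) / ∑ l, w (Y l ω))
    have hwmin_pos : 0 < wmin := by
      obtain ⟨y0, -, hy0⟩ := Finset.exists_mem_eq_inf' Finset.univ_nonempty w
      rw [hwmin, hy0]; exact hw y0
    have hwmin_le : wmin ≤ w (Y j0 ω) := hwmin ▸ Finset.inf'_le w (Finset.mem_univ _)
    have h1 : wmin / ∑ l, w (Y l ω) < wmin / (2 * Nt * Ew) := by
      calc wmin / ∑ l, w (Y l ω) ≤ w (Y j0 ω) / ∑ l, w (Y l ω) :=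
            div_le_div_of_nonneg_right hwmin_le hSpos.le
        _ < wmin / (2 * Nt * Ew) := hj0 ▸ hω
    have h2 : 2 * Nt * Ew < ∑ l, w (Y l ω) := by
      have h2NtEw : 0 < 2 * (Nt:ℝ) * Ew := by positivity
      exact (div_lt_div_iff_of_pos_left hwmin_pos hSpos h2NtEw).mp h1
    have hSc : (∑ j ∈ s, X j) ω = ∑ p : Σ i : Fin n, Fin (Nc i), w (Y (Sum.inl p) ω) := by
      rw [Finset.sum_apply]
      exact hsum_s (fun j => X j ω)
    have hdecomp : ∑ l, w (Y l ω)
        = (∑ p : Σ i : Fin n, Fin (Nc i), w (Y (Sum.inl p) ω)) + w (Y (Sum.inr ()) ω) := by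
      rw [Fintype.sum_sum_type]
      simp
    by_cases hB' : c ≤ X (Sum.inr ()) ω
    · exact Or.inr hB'
    · left
      push_neg at hB'
      have hXstar : X (Sum.inr ()) ω = w (Y (Sum.inr ()) ω) := rfl
      show c ≤ |(∑ j ∈ s, X j) ω - μ[∑ j ∈ s, X j]|
      have hle : c ≤ (∑ j ∈ s, X j) ω - μ[∑ j ∈ s, X j] := by
        rw [hScMean, hSc]
        rw [hXstar] at hB'
        have hcc : c = Nt * Ew / 2 := hc_def
        linarith [hdecomp ▸ h2]
      exact hle.trans (le_abs_self _)
  -- Chebyshev bound on A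
  have hA_bound : (μ A).toReal ≤ 4 * Vw / (Nt * Ew ^ 2) := by
    have hcheb := meas_ge_le_variance_div_sq (μ := μ)
      (memLp_finset_sum' s fun j _ => hL2 j) hc
    have hVnn : 0 ≤ variance (∑ j ∈ s, X j) μ / c ^ 2 :=
      div_nonneg (variance_nonneg _ _) (sq_nonneg _)
    have h1 : (μ A).toReal ≤ variance (∑ j ∈ s, X j) μ / c ^ 2 := by
      have := ENNReal.toReal_mono ENNReal.ofReal_ne_top hcheb
      rwa [ENNReal.toReal_ofReal hVnn] at this
    refine h1.trans ?_
    rw [hc_def, div_le_div_iff₀ (by positivity) (by positivity)]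
    nlinarith [mul_le_mul_of_nonneg_right hVarLe (show (0:ℝ) ≤ Nt * Ew ^ 2 by positivity)]
  -- Markov bound on B
  have hB_bound : (μ B).toReal ≤ 2 * (∑ y, Pstar y * w y) / (Nt * Ew) := by
    have hmark := mul_meas_ge_le_integral_of_nonneg (μ := μ) (f := X (Sum.inr ()))
      (Filter.Eventually.of_forall fun ω => (hw _).le) (hInt _) c
    have hEs : ∫ ω, X (Sum.inr ()) ω ∂μ = ∑ y, Pstar y * w y := hExp (Sum.inr ()) w
    rw [hEs, measureReal_def] at hmark
    rw [le_div_iff₀ (by positivity : (0:ℝ) < Nt * Ew)]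
    have hcc : c = Nt * Ew / 2 := hc_def
    nlinarith [hmark, ENNReal.toReal_nonneg (a := μ B)]
  -- conclusion
  calc (μ {ω | Finset.univ.inf' Finset.univ_nonempty
        (fun j => w (Y j ω) / ∑ l, w (Y l ω)) < wmin / (2 * Nt * Ew)}).toReal
      ≤ (μ A).toReal + (μ B).toReal := by
        rw [← ENNReal.toReal_add (measure_ne_top μ A) (measure_ne_top μ B)]
        exact ENNReal.toReal_mono
          (ENNReal.add_ne_top.mpr ⟨measure_ne_top μ A, measure_ne_top μ B⟩)
          ((measure_mono hsub).trans (measure_union_le A B))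
    _ ≤ 4 * Vw / (Nt * Ew ^ 2) + 2 * (∑ y, Pstar y * w y) / (Nt * Ew) :=
        add_le_add hA_bound hB_bound
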